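/- arXiv:2005.11026 — 2 statements merged into one kernel-verified Lean document; each statement's English description precedes it below -/
import Mathlib

section
/- Let G=(V,E,c) be a capacitated tree and s_1,…,s_k supply vectors on G. For each 1≤i≤k let v_i be any median vertex for s_i. Then λ(G; s_1∘v_1,…,s_k∘v_k) = λ(G; s_1,…,s_k); that is, choosing a median target for each supply vector is an optimal solution to the target location problem for maximizing concurrent multi-commodity flow on trees. -/
open Finset

/-- A flow `f` on an (arbitrarily oriented) undirected graph satisfies the
demand vector `d` if at every vertex the net inflow equals the demand. -/
def satisfiesFlow {V E : Type*} [Fintype E] [DecidableEq V]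
    (hd tl : E → V) (f : E → ℝ) (d : V → ℝ) : Prop :=
  ∀ v : V, d v = (∑ e : E, if hd e = v then f e else 0)
      - (∑ e : E, if tl e = v then f e else 0)

/-- `assign s v` is the demand vector `s ∘ v` obtained from the supply vector `s`
by making `v` the target: it agrees with `s` off `v` and has value
`-∑_{u ≠ v} s u` at `v`. -/
def assign {V : Type*} [Fintype V] [DecidableEq V] (s : V → ℝ) (v : V) : V → ℝ :=
  fun u => if u = v then -(∑ w ∈ univ.erase v, s w) else s u

/-- The optimum of the maximum concurrent multi-commodity flow problem for
demand vectors `d i` on the capacitated graph given by `hd`, `tl`, `c`: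
the largest `l ≥ 0` such that some valid multi-commodity flow satisfies `l • d i`
for all `i`. -/
noncomputable def lamD {V E ι : Type*} [Fintype V] [Fintype E] [Fintype ι] [DecidableEq V]
    (hd tl : E → V) (c : E → ℝ) (d : ι → V → ℝ) : ℝ :=
  sSup {l : ℝ | 0 ≤ l ∧ ∃ f : ι → E → ℝ,
    (∀ e, ∑ i, |f i e| ≤ c e) ∧
    ∀ i, satisfiesFlow hd tl (f i) (fun v => l * d i v)}

/-- The optimum of the target location problem LoMuF for supply vectors `s i`:
the best value of `lamD` over all choices of targets. -/
noncomputable def lamS {V E ι : Type*} [Fintype V] [Fintype E] [Fintype ι] [DecidableEq V]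
    (hd tl : E → V) (c : E → ℝ) (s : ι → V → ℝ) : ℝ :=
  sSup {l : ℝ | 0 ≤ l ∧ ∃ (v : ι → V) (f : ι → E → ℝ),
    (∀ e, ∑ i, |f i e| ≤ c e) ∧
    ∀ i, satisfiesFlow hd tl (f i) (fun u => l * assign (s i) (v i) u)}

open scoped Classical in
/-- `v` is a median vertex of the graph `G` for the (supply) vector `d`:
for every connected component `C` of `G - v`, the total `|d|`-weight of `C`
is at most the total `|d|`-weight of its complement. -/
def IsMedian {V : Type*} [Fintype V] (G : SimpleGraph V) (d : V → ℝ) (v : V) : Prop :=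
  ∀ C : (G.induce {w | w ≠ v}).ConnectedComponent,
    (∑ x : V, if h : x ≠ v then
        (if (G.induce {w | w ≠ v}).connectedComponentMk ⟨x, h⟩ = C then |d x| else 0)
      else 0)
    ≤ ∑ x : V, if h : x ≠ v then
        (if (G.induce {w | w ≠ v}).connectedComponentMk ⟨x, h⟩ = C then 0 else |d x|)
      else |d x|

/- ---------------------------------------------------------------------------
   Auxiliary material
--------------------------------------------------------------------------- -/

section Aux

open SimpleGraph

open scoped Classical

variable {V E : Type*} [Fintype V] [Fintype E] [DecidableEq V]

/-- Sums of flows satisfy the sum of the demands. -/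
lemma satisfiesFlow_add {hd tl : E → V} {f g : E → ℝ} {d d' : V → ℝ}
    (hf : satisfiesFlow hd tl f d) (hg : satisfiesFlow hd tl g d') :
    satisfiesFlow hd tl (fun e => f e + g e) (fun v => d v + d' v) := by
  intro v
  have h1 := hf v
  have h2 := hg v
  have e1 : ∀ (p : E → V), (∑ e : E, if p e = v then f e + g e else 0)
      = (∑ e : E, if p e = v then f e else 0) + (∑ e : E, if p e = v then g e else 0) := by
    intro p
    rw [← Finset.sum_add_distrib]
    exact Finset.sum_congr rfl fun e _ => by split <;> simp
  simp only []
  rw [e1, e1]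
  linarith

lemma satisfiesFlow_congr {hd tl : E → V} {f : E → ℝ} {d d' : V → ℝ}
    (hf : satisfiesFlow hd tl f d) (h : ∀ v, d v = d' v) :
    satisfiesFlow hd tl f d' := fun v => (h v) ▸ hf v

/-- The flow supported on a single edge. -/
lemma satisfiesFlow_single {hd tl : E → V} (e : E) (t : ℝ) :
    satisfiesFlow hd tl (fun e' => if e' = e then t else 0)
      (fun u => (if u = hd e then t else 0) - (if u = tl e then t else 0)) := by
  intro u
  have h1 : ∀ (p : E → V), (∑ e' : E, if p e' = u then (if e' = e then t else 0) else 0)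
      = if u = p e then t else 0 := by
    intro p
    rw [Finset.sum_eq_single e]
    · by_cases h : p e = u
      · rw [if_pos h, if_pos rfl, if_pos h.symm]
      · rw [if_neg h, if_neg (fun hh => h hh.symm)]
    · intro b _ hb; simp [hb]
    · simp
  simp only []
  rw [h1, h1]

/-- Flow along a walk from `a` to `b` carrying value `t`. -/
lemma walk_flow {G : SimpleGraph V} {hd tl : E → V}
    (hadj : ∀ u v, G.Adj u v ↔ ∃ e, (tl e = u ∧ hd e = v) ∨ (tl e = v ∧ hd e = u))
    {a b : V} (p : G.Walk a b) (t : ℝ) :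
    ∃ f : E → ℝ, satisfiesFlow hd tl f
      (fun u => (if u = b then t else 0) - (if u = a then t else 0)) := by
  induction p with
  | nil =>
    refine ⟨fun _ => 0, fun u => by simp⟩
  | @cons a x b h q ih =>
    obtain ⟨f, hf⟩ := ih
    obtain ⟨e, he⟩ := (hadj a x).1 h
    rcases he with ⟨h1, h2⟩ | ⟨h1, h2⟩
    · refine ⟨fun e' => (if e' = e then t else 0) + f e', satisfiesFlow_congr
        (satisfiesFlow_add (satisfiesFlow_single e t) hf) fun u => ?_⟩
      rw [h1, h2]
      by_cases hx : u = x <;> by_cases hb : u = b <;> by_cases ha2 : u = a <;>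
        simp_all <;> ring
    · refine ⟨fun e' => (if e' = e then -t else 0) + f e', satisfiesFlow_congr
        (satisfiesFlow_add (satisfiesFlow_single e (-t)) hf) fun u => ?_⟩
      rw [h1, h2]
      by_cases hx : u = x <;> by_cases hb : u = b <;> by_cases ha2 : u = a <;>
        simp_all <;> ring

variable {G : SimpleGraph V} {hd tl : E → V}

/-- On a tree, the value of a flow on an edge equals the total demand on the
`hd`-side of that edge. -/
lemma cut_formula (hT : G.IsTree)
    (hadj : ∀ u v, G.Adj u v ↔ ∃ e, (tl e = u ∧ hd e = v) ∨ (tl e = v ∧ hd e = u))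
    (hinj : ∀ e e', ((tl e = tl e' ∧ hd e = hd e') ∨ (tl e = hd e' ∧ hd e = tl e'))
        → e = e')
    {f : E → ℝ} {d : V → ℝ} (hf : satisfiesFlow hd tl f d) (e0 : E) :
    f e0 = ∑ x : V,
      if (G.deleteEdges {s(tl e0, hd e0)}).Reachable (hd e0) x then d x else 0 := by
  set R : V → Prop :=
    fun x => (G.deleteEdges {s(tl e0, hd e0)}).Reachable (hd e0) x with hR
  have hGadj : G.Adj (tl e0) (hd e0) := (hadj _ _).2 ⟨e0, Or.inl ⟨rfl, rfl⟩⟩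
  have hbridge : ¬ (G.deleteEdges {s(tl e0, hd e0)}).Reachable (tl e0) (hd e0) := by
    have hb := (isAcyclic_iff_forall_adj_isBridge.mp hT.IsAcyclic) hGadj
    exact isBridge_iff.mp hb
  have hRhd : R (hd e0) := Reachable.refl _
  have hRtl : ¬ R (tl e0) := fun h => hbridge h.symm
  have cross : ∀ e, e ≠ e0 → (R (tl e) ↔ R (hd e)) := by
    intro e he
    have hA : (G.deleteEdges {s(tl e0, hd e0)}).Adj (tl e) (hd e) := by
      rw [SimpleGraph.deleteEdges_adj]
      refine ⟨(hadj _ _).2 ⟨e, Or.inl ⟨rfl, rfl⟩⟩, ?_⟩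
      intro hmem
      rw [Set.mem_singleton_iff, Sym2.eq_iff] at hmem
      rcases hmem with ⟨hx, hy⟩ | ⟨hx, hy⟩
      · exact he (hinj e e0 (Or.inl ⟨hx, hy⟩))
      · exact he (hinj e e0 (Or.inr ⟨hx, hy⟩))
    exact ⟨fun h => h.trans hA.reachable, fun h => h.trans hA.symm.reachable⟩
  have swap : ∀ (p : E → V) (e : E),
      (∑ x : V, if R x then (if p e = x then f e else 0) else 0) = if R (p e) then f e else 0 := by
    intro p e
    have h : ∀ x : V, (if R x then (if p e = x then f e else 0) else 0)
        = if p e = x then (if R x then f e else 0) else 0 := by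
      intro x
      by_cases h1 : R x <;> by_cases h2 : p e = x <;> simp [h1, h2]
    rw [Finset.sum_congr rfl fun x _ => h x, Finset.sum_ite_eq, if_pos (Finset.mem_univ _)]
  have expand : (∑ x : V, if R x then d x else 0)
      = ∑ e : E, ((if R (hd e) then f e else 0) - (if R (tl e) then f e else 0)) := by
    have e1 : ∀ x : V, (if R x then d x else 0)
        = ∑ e : E, ((if R x then (if hd e = x then f e else 0) else 0)
            - (if R x then (if tl e = x then f e else 0) else 0)) := by
      intro x
      rw [Finset.sum_sub_distrib]
      by_cases h : R x
      · simp only [if_pos h]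
        exact hf x
      · simp [if_neg h]
    rw [Finset.sum_congr rfl fun x _ => e1 x, Finset.sum_comm]
    refine Finset.sum_congr rfl fun e _ => ?_
    rw [Finset.sum_sub_distrib, swap hd e, swap tl e]
  rw [expand, Finset.sum_eq_single e0]
  · rw [if_pos hRhd, if_neg hRtl, sub_zero]
  · intro e _ he
    by_cases h : R (tl e)
    · rw [if_pos h, if_pos ((cross e he).1 h), sub_self]
    · rw [if_neg h, if_neg (fun hh => h ((cross e he).2 hh)), sub_self]
  · simp


/-- Every vertex is on one of the two sides of an edge of a connected graph. -/
lemma side_total (hconn : G.Connected)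
    (hadj : ∀ u v, G.Adj u v ↔ ∃ e, (tl e = u ∧ hd e = v) ∨ (tl e = v ∧ hd e = u))
    (e0 : E) (z : V) :
    (G.deleteEdges {s(tl e0, hd e0)}).Reachable (hd e0) z ∨
      (G.deleteEdges {s(tl e0, hd e0)}).Reachable (tl e0) z := by
  obtain ⟨p⟩ := hconn.preconnected (hd e0) z
  have key : ∀ {y z' : V} (_ : G.Walk y z'),
      ((G.deleteEdges {s(tl e0, hd e0)}).Reachable (hd e0) y ∨
        (G.deleteEdges {s(tl e0, hd e0)}).Reachable (tl e0) y) →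
      ((G.deleteEdges {s(tl e0, hd e0)}).Reachable (hd e0) z' ∨
        (G.deleteEdges {s(tl e0, hd e0)}).Reachable (tl e0) z') := by
    intro y z' p
    induction p with
    | nil => exact id
    | @cons u x w h q ih =>
      intro hy
      apply ih
      by_cases hedge : s(u, x) = s(tl e0, hd e0)
      · rw [Sym2.eq_iff] at hedge
        rcases hedge with ⟨_, h2⟩ | ⟨_, h2⟩
        · exact Or.inl (h2 ▸ Reachable.refl _)
        · exact Or.inr (h2 ▸ Reachable.refl _)
      · have hA : (G.deleteEdges {s(tl e0, hd e0)}).Adj u x := by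
          rw [SimpleGraph.deleteEdges_adj]
          exact ⟨h, by simpa using hedge⟩
        rcases hy with hy | hy
        · exact Or.inl (hy.trans hA.reachable)
        · exact Or.inr (hy.trans hA.reachable)
  exact key p (Or.inl (Reachable.refl _))

lemma reachable_of_mem_support {G' : SimpleGraph V} {a b : V} (p : G'.Walk a b) :
    ∀ y ∈ p.support, G'.Reachable a y := by
  induction p with
  | nil =>
    intro y hy
    rw [SimpleGraph.Walk.support_nil, List.mem_singleton] at hy
    exact hy ▸ Reachable.refl _
  | @cons u x w h q ih =>
    intro y hy
    rw [SimpleGraph.Walk.support_cons, List.mem_cons] at hy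
    rcases hy with rfl | hy
    · exact Reachable.refl _
    · exact h.reachable.trans (ih y hy)

/-- A walk avoiding `v` gives reachability in the graph with `v` deleted. -/
lemma induce_reachable_of_avoid {v : V} {G' : SimpleGraph V}
    (hle : G' ≤ G) {a b : V} (p : G'.Walk a b) (hv : v ∉ p.support) :
    ∀ (ha : a ≠ v) (hb : b ≠ v),
      (G.induce {w | w ≠ v}).Reachable ⟨a, ha⟩ ⟨b, hb⟩ := by
  induction p with
  | nil => intro ha hb; exact Reachable.refl _
  | @cons a x b h q ih =>
    intro ha hb
    have hv' : v ∉ q.support := by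
      rw [SimpleGraph.Walk.support_cons, List.mem_cons] at hv
      exact fun hmem => hv (Or.inr hmem)
    have hx : x ≠ v := fun hxv => hv' (hxv ▸ q.start_mem_support)
    have hadj2 : (G.induce {w | w ≠ v}).Adj ⟨a, ha⟩ ⟨x, hx⟩ := hle h
    exact hadj2.reachable.trans (ih hv' hx hb)

end Aux

section MedianAux

open SimpleGraph
open scoped Classical

variable {V : Type*} [Fintype V]

/-- The median property bounds the weight of any vertex set contained in a single
component of `G - v` by half of the total weight. -/
lemma median_bound {G : SimpleGraph V} {s : V → ℝ} {v : V}
    (hv : IsMedian G s v) (P : V → Prop) (hvP : ¬ P v)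
    (C : (G.induce {w | w ≠ v}).ConnectedComponent)
    (hP : ∀ x, P x → ∃ h : x ≠ v,
      (G.induce {w | w ≠ v}).connectedComponentMk ⟨x, h⟩ = C) :
    2 * (∑ x : V, if P x then |s x| else 0) ≤ ∑ x : V, |s x| := by
  have h1 := hv C
  have h2 : (∑ x : V, if P x then |s x| else 0)
      ≤ ∑ x : V, if h : x ≠ v then
          (if (G.induce {w | w ≠ v}).connectedComponentMk ⟨x, h⟩ = C then |s x| else 0)
        else 0 := by
    apply Finset.sum_le_sum
    intro x _
    by_cases hx : P x
    · obtain ⟨hxv, hcomp⟩ := hP x hx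
      rw [if_pos hx, dif_pos hxv, if_pos hcomp]
    · rw [if_neg hx]
      by_cases hxv : x ≠ v
      · rw [dif_pos hxv]
        by_cases hc : (G.induce {w | w ≠ v}).connectedComponentMk ⟨x, hxv⟩ = C
        · rw [if_pos hc]; exact abs_nonneg _
        · rw [if_neg hc]
      · rw [dif_neg hxv]
  have h3 : (∑ x : V, if h : x ≠ v then
          (if (G.induce {w | w ≠ v}).connectedComponentMk ⟨x, h⟩ = C then |s x| else 0)
        else 0)
      + (∑ x : V, if h : x ≠ v then
          (if (G.induce {w | w ≠ v}).connectedComponentMk ⟨x, h⟩ = C then 0 else |s x|)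
        else |s x|)
      = ∑ x : V, |s x| := by
    rw [← Finset.sum_add_distrib]
    refine Finset.sum_congr rfl fun x _ => ?_
    by_cases hxv : x ≠ v
    · rw [dif_pos hxv, dif_pos hxv]
      by_cases hc : (G.induce {w | w ≠ v}).connectedComponentMk ⟨x, hxv⟩ = C
      · rw [if_pos hc, if_pos hc, add_zero]
      · rw [if_neg hc, if_neg hc, zero_add]
    · rw [dif_neg hxv, dif_neg hxv, zero_add]
  linarith

end MedianAux

section KeyLemma

open SimpleGraph
open scoped Classical

variable {V E : Type*} [Fintype V] [Fintype E] [DecidableEq V]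
variable {G : SimpleGraph V} {hd tl : E → V}

lemma assign_eq (sv : V → ℝ) (u x : V) :
    assign sv u x = sv x - (if x = u then ∑ y : V, sv y else 0) := by
  unfold assign
  by_cases hx : x = u
  · rw [if_pos hx, if_pos hx, hx]
    have h := Finset.sum_erase_add Finset.univ sv (Finset.mem_univ u)
    linarith
  · rw [if_neg hx, if_neg hx, sub_zero]

/-- The key comparison: on the side-sum of any edge, the demand vector assigned to
a median target is no larger in absolute value than the one assigned to any target. -/
lemma median_cut_le (hT : G.IsTree)
    (hadj : ∀ u v, G.Adj u v ↔ ∃ e, (tl e = u ∧ hd e = v) ∨ (tl e = v ∧ hd e = u))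
    (hinj : ∀ e e', ((tl e = tl e' ∧ hd e = hd e') ∨ (tl e = hd e' ∧ hd e = tl e'))
        → e = e')
    (e0 : E) (sv : V → ℝ) (hs : ∀ u, sv u ≤ 0) (v w : V) (hv : IsMedian G sv v) :
    |∑ x : V, if (G.deleteEdges {s(tl e0, hd e0)}).Reachable (hd e0) x
        then assign sv v x else 0|
      ≤ |∑ x : V, if (G.deleteEdges {s(tl e0, hd e0)}).Reachable (hd e0) x
        then assign sv w x else 0| := by
  set R : V → Prop :=
    fun x => (G.deleteEdges {s(tl e0, hd e0)}).Reachable (hd e0) x with hR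
  set a : ℝ := ∑ x : V, if R x then sv x else 0 with ha
  set S : ℝ := ∑ x : V, sv x with hS
  -- basic facts about the edge
  have hGadj : G.Adj (tl e0) (hd e0) := (hadj _ _).2 ⟨e0, Or.inl ⟨rfl, rfl⟩⟩
  have hbridge : ¬ (G.deleteEdges {s(tl e0, hd e0)}).Reachable (tl e0) (hd e0) := by
    have hb := (isAcyclic_iff_forall_adj_isBridge.mp hT.IsAcyclic) hGadj
    exact isBridge_iff.mp hb
  have hRhd : R (hd e0) := Reachable.refl _
  have hRtl : ¬ R (tl e0) := fun h => hbridge h.symm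
  -- rewriting the sums
  have hassign : ∀ u : V, (∑ x : V, if R x then assign sv u x else 0)
      = a - (if R u then S else 0) := by
    intro u
    have e1 : ∀ x : V, (if R x then assign sv u x else 0)
        = (if R x then sv x else 0) - (if x = u then (if R x then S else 0) else 0) := by
      intro x
      by_cases h2 : x = u
      · subst h2
        by_cases h1 : R x <;> simp [h1, assign_eq sv x x, ← hS]
      · by_cases h1 : R x <;> simp [h1, h2, assign_eq sv u x]
    rw [Finset.sum_congr rfl fun x _ => e1 x, Finset.sum_sub_distrib]
    congr 1
    rw [Finset.sum_ite_eq', if_pos (Finset.mem_univ u)]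
  have hsplit : a + (∑ x : V, if R x then 0 else sv x) = S := by
    rw [ha, ← Finset.sum_add_distrib]
    exact Finset.sum_congr rfl fun x _ => by by_cases h : R x <;> simp [h]
  have hcompl_nonpos : (∑ x : V, if R x then 0 else sv x) ≤ 0 :=
    Finset.sum_nonpos fun x _ => by by_cases h : R x <;> simp [h, hs x]
  have ha_nonpos : a ≤ 0 :=
    Finset.sum_nonpos fun x _ => by by_cases h : R x <;> simp [h, hs x]
  have hSa : S ≤ a := by linarith
  -- absolute-value sums vs plain sums
  have habstot : (∑ x : V, |sv x|) = -S := by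
    rw [hS, ← Finset.sum_neg_distrib]
    exact Finset.sum_congr rfl fun x _ => abs_of_nonpos (hs x)
  rw [hassign v, hassign w]
  by_cases hv' : R v <;> by_cases hw' : R w
  · rw [if_pos hv', if_pos hw']
  · -- median in A, other target on the tl side: bound the complement side
    rw [if_pos hv', if_neg hw', sub_zero]
    have hnetlv : tl e0 ≠ v := fun h => hRtl (h ▸ hv')
    have hmed : 2 * (∑ x : V, if ¬ R x then |sv x| else 0) ≤ ∑ x : V, |sv x| := by
      have h0 := median_bound hv (fun x => ¬ R x) (not_not_intro hv')
        ((G.induce {w | w ≠ v}).connectedComponentMk ⟨tl e0, hnetlv⟩) ?_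
      · convert h0 using 4
      intro x hx
      have hBx : (G.deleteEdges {s(tl e0, hd e0)}).Reachable (tl e0) x :=
        (side_total hT.isConnected hadj e0 x).resolve_left hx
      obtain ⟨p⟩ := hBx
      have hvsupp : v ∉ p.support := by
        intro hmem
        exact hbridge ((reachable_of_mem_support p v hmem).trans hv'.symm).symm.symm
      have hxv : x ≠ v := fun h => hvsupp (h ▸ p.end_mem_support)
      exact ⟨hxv, (ConnectedComponent.sound
        ((induce_reachable_of_avoid (G.deleteEdges_le _) p hvsupp hnetlv hxv))).symm⟩
    have hconv : (∑ x : V, if ¬ R x then |sv x| else 0) = a - S := by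
      have hterm : ∀ x : V, (if ¬ R x then |sv x| else 0) = -(if R x then 0 else sv x) :=
        fun x => by by_cases h : R x <;> simp [h, abs_of_nonpos (hs x)]
      rw [Finset.sum_congr rfl fun x _ => hterm x, Finset.sum_neg_distrib]
      linarith
    rw [hconv, habstot] at hmed
    rw [abs_of_nonneg (by linarith : (0:ℝ) ≤ a - S), abs_of_nonpos ha_nonpos]
    linarith
  · -- median on the tl side, other target in A: bound the A side
    rw [if_neg hv', if_pos hw', sub_zero]
    have hnehdv : hd e0 ≠ v := fun h => hv' (h ▸ hRhd)
    have hmed : 2 * (∑ x : V, if R x then |sv x| else 0) ≤ ∑ x : V, |sv x| := by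
      have h0 := median_bound hv R hv'
        ((G.induce {w | w ≠ v}).connectedComponentMk ⟨hd e0, hnehdv⟩) ?_
      · convert h0 using 4
      intro x hx
      obtain ⟨p⟩ := hx
      have hvsupp : v ∉ p.support := fun hmem => hv' (reachable_of_mem_support p v hmem)
      have hxv : x ≠ v := fun h => hvsupp (h ▸ p.end_mem_support)
      exact ⟨hxv, (ConnectedComponent.sound
        ((induce_reachable_of_avoid (G.deleteEdges_le _) p hvsupp hnehdv hxv))).symm⟩
    have hconv2 : (∑ x : V, if R x then |sv x| else 0) = -a := by
      have hterm : ∀ x : V, (if R x then |sv x| else 0) = -(if R x then sv x else 0) :=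
        fun x => by by_cases h : R x <;> simp [h, abs_of_nonpos (hs x)]
      rw [Finset.sum_congr rfl fun x _ => hterm x, Finset.sum_neg_distrib, ha]
    rw [hconv2, habstot] at hmed
    rw [abs_of_nonpos ha_nonpos, abs_of_nonneg (by linarith : (0:ℝ) ≤ a - S)]
    linarith
  · rw [if_neg hv', if_neg hw']

end KeyLemma

/-- Theorem: on a capacitated tree, choosing a median vertex `v i` as the target of
each supply vector `s i` is an optimum solution of the target location problem
LoMuF: the concurrent flow value achieved with these targets equals the optimum
over all choices of targets. -/
theorem tree_median_optimal {V E ι : Type*} [Fintype V] [Fintype E] [Fintype ι]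
    [DecidableEq V]
    (G : SimpleGraph V) (hT : G.IsTree)
    (hd tl : E → V)
    (hloop : ∀ e, tl e ≠ hd e)
    (hadj : ∀ u v, G.Adj u v ↔ ∃ e, (tl e = u ∧ hd e = v) ∨ (tl e = v ∧ hd e = u))
    (hinj : ∀ e e', ((tl e = tl e' ∧ hd e = hd e') ∨ (tl e = hd e' ∧ hd e = tl e'))
        → e = e')
    (c : E → ℝ) (hc : ∀ e, 0 ≤ c e)
    (s : ι → V → ℝ) (hs : ∀ i u, s i u ≤ 0)
    (v : ι → V) (hv : ∀ i, IsMedian G (s i) (v i)) :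
    lamD hd tl c (fun i => assign (s i) (v i)) = lamS hd tl c s := by
  classical
  unfold lamD lamS
  congr 1
  ext l
  simp only [Set.mem_setOf_eq]
  constructor
  · rintro ⟨hl, f, hcap, hflow⟩
    exact ⟨hl, v, f, hcap, hflow⟩
  · rintro ⟨hl, w, f, hcap, hflow⟩
    refine ⟨hl, ?_⟩
    have hpre := hT.isConnected.preconnected
    -- auxiliary flows along a walk from `v i` to `w i`
    have hqex : ∀ i : ι, ∃ q : E → ℝ, satisfiesFlow hd tl q
        (fun u => (if u = w i then l * ∑ x : V, s i x else 0)
          - (if u = v i then l * ∑ x : V, s i x else 0)) :=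
      fun i => walk_flow hadj ((hpre (v i) (w i)).some) (l * ∑ x : V, s i x)
    choose q hq using hqex
    set g : ι → E → ℝ := fun i e => f i e + q i e with hg_def
    have hg : ∀ i, satisfiesFlow hd tl (g i) (fun u => l * assign (s i) (v i) u) := by
      intro i
      apply satisfiesFlow_congr (satisfiesFlow_add (hflow i) (hq i))
      intro u
      rw [assign_eq (s i) (w i) u, assign_eq (s i) (v i) u]
      rcases eq_or_ne (v i) (w i) with hvw | hvw <;> by_cases h1 : u = v i <;> by_cases h2 : u = w i <;> simp_all <;> ring
    refine ⟨g, ?_, hg⟩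
    intro e
    refine le_trans ?_ (hcap e)
    apply Finset.sum_le_sum
    intro i _
    have h1 := cut_formula hT hadj hinj (hg i) e
    have h2 := cut_formula hT hadj hinj (hflow i) e
    have pull : ∀ t : V,
        (∑ x : V, if (G.deleteEdges {s(tl e, hd e)}).Reachable (hd e) x
            then l * assign (s i) t x else 0)
        = l * ∑ x : V, if (G.deleteEdges {s(tl e, hd e)}).Reachable (hd e) x
            then assign (s i) t x else 0 := by
      intro t
      rw [Finset.mul_sum]
      exact Finset.sum_congr rfl fun x _ => by split <;> simp
    rw [h1, h2, pull, pull, abs_mul, abs_mul]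
    exact mul_le_mul_of_nonneg_left
      (median_cut_le hT hadj hinj e (s i) (hs i) (v i) (w i) (hv i)) (abs_nonneg l)
end

section
/- Let s_1,…,s_k be nonzero supply vectors on a capacitated undirected graph G=(V,E,c), for each i let w_i ∈ argmax_{v∈V} |s_i(v)| be a master source of s_i, and let η = max_{1≤i≤k} (Σ_{v∈V} |s_i(v)|) / |s_i(w_i)| be the concentration of the supply vectors. Then λ(G; s_1∘w_1,…,s_k∘w_k) ≥ λ(G; s_1,…,s_k) / max{η−1, 1}. -/
open Finset

set_option linter.unusedSectionVars false

section aux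
variable {V E : Type*} [Fintype V] [Fintype E] [DecidableEq V]

def divg (hd tl : E → V) (g : E → ℝ) (x : V) : ℝ :=
  (∑ e : E, if hd e = x then g e else 0) - (∑ e : E, if tl e = x then g e else 0)

lemma divg_linear (hd tl : E → V) (a b : ℝ) (g₁ g₂ : E → ℝ) (x : V) :
    divg hd tl (fun e => a * g₁ e + b * g₂ e) x
      = a * divg hd tl g₁ x + b * divg hd tl g₂ x := by
  unfold divg
  have h1 : ∀ (p : E → V), (∑ e : E, if p e = x then a * g₁ e + b * g₂ e else 0)
      = a * (∑ e : E, if p e = x then g₁ e else 0)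
        + b * (∑ e : E, if p e = x then g₂ e else 0) := by
    intro p
    rw [Finset.mul_sum, Finset.mul_sum, ← Finset.sum_add_distrib]
    refine Finset.sum_congr rfl fun e _ => ?_
    by_cases h : p e = x <;> simp [h]
  rw [h1, h1]; ring

lemma divg_single [DecidableEq E] (hd tl : E → V) (g : E → ℝ) (e : E) (δ : ℝ) (x : V) :
    divg hd tl (fun e' => g e' + if e' = e then δ else 0) x
      = divg hd tl g x + δ * ((if hd e = x then 1 else 0) - (if tl e = x then 1 else 0)) := by
  unfold divg
  have h1 : ∀ (p : E → V), (∑ e' : E, if p e' = x then g e' + (if e' = e then δ else 0) else 0)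
      = (∑ e' : E, if p e' = x then g e' else 0) + (if p e = x then δ else 0) := by
    intro p
    have h2 : ∀ e' ∈ (univ : Finset E), (if p e' = x then g e' + (if e' = e then δ else 0) else 0)
        = (if p e' = x then g e' else 0) + (if e' = e then (if p e' = x then δ else 0) else 0) := by
      intro e' _
      by_cases h' : e' = e
      · subst h'; by_cases h : p e' = x <;> simp [h]
      · by_cases h : p e' = x <;> simp [h, h']
    rw [Finset.sum_congr rfl h2, Finset.sum_add_distrib,
      Finset.sum_ite_eq' univ e (fun e' => if p e' = x then δ else 0)]
    simp
  rw [h1, h1]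
  by_cases h : hd e = x <;> by_cases h' : tl e = x <;> simp [h, h'] <;> ring

lemma sum_divg (hd tl : E → V) (g : E → ℝ) (R : Finset V) :
    ∑ u ∈ R, divg hd tl g u
      = ∑ e : E, ((if hd e ∈ R then g e else 0) - (if tl e ∈ R then g e else 0)) := by
  unfold divg
  rw [Finset.sum_sub_distrib, Finset.sum_sub_distrib]
  congr 1 <;> rw [Finset.sum_comm] <;>
    exact Finset.sum_congr rfl fun e _ => Finset.sum_ite_eq R _ (fun _ => g e)

lemma divg_total (hd tl : E → V) (g : E → ℝ) : ∑ x : V, divg hd tl g x = 0 := by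
  unfold divg
  rw [Finset.sum_sub_distrib]
  have h1 : ∀ (p : E → V), (∑ x : V, ∑ e : E, if p e = x then g e else 0) = ∑ e : E, g e := by
    intro p
    rw [Finset.sum_comm]
    refine Finset.sum_congr rfl fun e _ => ?_
    rw [Finset.sum_ite_eq univ (p e) (fun _ => g e)]
    simp
  rw [h1, h1, sub_self]

end aux

inductive Reach {V E : Type*} (hd tl : E → V) (lo hi h : E → ℝ) (w : V) : V → Prop
  | base : Reach hd tl lo hi h w w
  | fwd (e : E) : Reach hd tl lo hi h w (tl e) → h e < hi e → Reach hd tl lo hi h w (hd e)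
  | bwd (e : E) : Reach hd tl lo hi h w (hd e) → lo e < h e → Reach hd tl lo hi h w (tl e)

lemma subflow {V E : Type*} [Fintype V] [Fintype E] [DecidableEq V]
    (hd tl : E → V) (f : E → ℝ) (d : V → ℝ)
    (hf : ∀ x, divg hd tl f x = d x) (v w : V) (hvw : w ≠ v)
    (hdle : ∀ u, u ≠ v → d u ≤ 0) :
    ∃ h : E → ℝ, (∀ e, min (f e) 0 ≤ h e ∧ h e ≤ max (f e) 0) ∧
      ∀ x, divg hd tl h x
        = (-(d w)) * ((if x = v then 1 else 0) - (if x = w then 1 else 0)) := by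
  classical
  set lo : E → ℝ := fun e => min (f e) 0 with hlo
  set hi : E → ℝ := fun e => max (f e) 0 with hhi
  have hlo_le : ∀ e, lo e ≤ f e := fun e => min_le_left _ _
  have hle_hi : ∀ e, f e ≤ hi e := fun e => le_max_left _ _
  have hlo0 : ∀ e, lo e ≤ 0 := fun e => min_le_right _ _
  have h0hi : ∀ e, 0 ≤ hi e := fun e => le_max_right _ _
  set K : Set (E → ℝ) := {h | (∀ e, lo e ≤ h e ∧ h e ≤ hi e) ∧
    ∀ u, u ≠ v → u ≠ w → divg hd tl h u = 0} with hKdef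
  have hcont' : ∀ (p : E → V) (u : V),
      Continuous (fun h : E → ℝ => ∑ e : E, if p e = u then h e else 0) := by
    intro p u
    refine continuous_finset_sum _ fun e _ => ?_
    by_cases hh : p e = u
    · simpa [hh] using continuous_apply e
    · simp only [if_neg hh]; exact continuous_const
  have hcont : ∀ u : V, Continuous (fun h : E → ℝ => divg hd tl h u) :=
    fun u => (hcont' hd u).sub (hcont' tl u)
  have hKc : IsCompact K := by
    have hsub : K ⊆ Set.pi Set.univ (fun e => Set.Icc (lo e) (hi e)) := by
      intro h hh e _; exact ⟨(hh.1 e).1, (hh.1 e).2⟩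
    refine IsCompact.of_isClosed_subset (isCompact_univ_pi fun e => isCompact_Icc) ?_ hsub
    have h1 : IsClosed {h : E → ℝ | ∀ e, lo e ≤ h e ∧ h e ≤ hi e} := by
      rw [Set.setOf_forall]
      refine isClosed_iInter fun e => ?_
      have : {h : E → ℝ | lo e ≤ h e ∧ h e ≤ hi e}
          = {h : E → ℝ | lo e ≤ h e} ∩ {h : E → ℝ | h e ≤ hi e} := rfl
      rw [this]
      exact (isClosed_le continuous_const (continuous_apply e)).inter
        (isClosed_le (continuous_apply e) continuous_const)
    have h2 : IsClosed {h : E → ℝ | ∀ u, u ≠ v → u ≠ w → divg hd tl h u = 0} := by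
      rw [Set.setOf_forall]
      refine isClosed_iInter fun u => ?_
      by_cases hu1 : u = v
      · simp [hu1]
      · by_cases hu2 : u = w
        · simp [hu2]
        · have : {h : E → ℝ | u ≠ v → u ≠ w → divg hd tl h u = 0}
              = {h : E → ℝ | divg hd tl h u = 0} := by
            ext h; simp [hu1, hu2]
          rw [this]
          exact isClosed_eq (hcont u) continuous_const
    exact h1.inter h2
  have mem0 : (0 : E → ℝ) ∈ K := by
    refine ⟨fun e => ⟨hlo0 e, h0hi e⟩, fun u _ _ => ?_⟩
    simp [divg]
  obtain ⟨hstar, hKm, hmax⟩ := hKc.exists_isMaxOn ⟨0, mem0⟩ ((hcont v).continuousOn)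
  have aug : ∀ u, Reach hd tl lo hi hstar w u →
      ∃ C ε : ℝ, 0 ≤ C ∧ 0 < ε ∧ ∀ δ : ℝ, 0 < δ → δ ≤ ε →
        ∃ h' : E → ℝ, (∀ e, lo e ≤ h' e ∧ h' e ≤ hi e) ∧
          (∀ x, divg hd tl h' x = divg hd tl hstar x
              + δ * ((if u = x then 1 else 0) - (if w = x then 1 else 0))) ∧
          (∀ e, |h' e - hstar e| ≤ C * δ) := by
    intro u hu
    induction hu with
    | base =>
        exact ⟨0, 1, le_refl 0, one_pos,
          fun δ _ _ => ⟨hstar, hKm.1, fun x => by ring, fun e => by simp⟩⟩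
    | fwd e hre hlt IH =>
        obtain ⟨C, ε, hC, hε, H⟩ := IH
        have hpos : 0 < hi e - hstar e := sub_pos.mpr hlt
        have hC1 : (0:ℝ) < C + 1 := by linarith
        refine ⟨C + 1, min ε ((hi e - hstar e)/(C+1)), by linarith,
          lt_min hε (by positivity), ?_⟩
        intro δ hδ hδε
        obtain ⟨h', hbox, hdiv, hnear⟩ := H δ hδ (le_trans hδε (min_le_left _ _))
        have hδ2 : (C+1) * δ ≤ hi e - hstar e := by
          have h3 := le_trans hδε (min_le_right _ _)
          calc (C+1)*δ ≤ (C+1) * ((hi e - hstar e)/(C+1)) := by nlinarith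
          _ = hi e - hstar e := by field_simp
        refine ⟨fun e' => h' e' + if e' = e then δ else 0, ?_, ?_, ?_⟩
        · intro e'
          beta_reduce
          by_cases he' : e' = e
          · subst he'
            rw [if_pos rfl]
            have h4 := abs_le.mp (hnear e')
            have h5 := (hbox e').1
            constructor
            · linarith
            · linarith [h4.2]
          · simp only [if_neg he', add_zero]; exact hbox e'
        · intro x
          rw [divg_single hd tl h' e δ x, hdiv x]
          ring
        · intro e'
          beta_reduce
          by_cases he' : e' = e
          · subst he'
            rw [if_pos rfl]
            have h4 : h' e' + δ - hstar e' = (h' e' - hstar e') + δ := by ring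
            rw [h4]
            calc |(h' e' - hstar e') + δ| ≤ |h' e' - hstar e'| + |δ| := abs_add_le _ _
            _ ≤ C * δ + δ := by
                have := hnear e'; rw [abs_of_pos hδ]; linarith
            _ = (C+1) * δ := by ring
          · simp only [if_neg he', add_zero]
            calc |h' e' - hstar e'| ≤ C * δ := hnear e'
            _ ≤ (C+1) * δ := by nlinarith
    | bwd e hre hlt IH =>
        obtain ⟨C, ε, hC, hε, H⟩ := IH
        have hpos : 0 < hstar e - lo e := sub_pos.mpr hlt
        have hC1 : (0:ℝ) < C + 1 := by linarith
        refine ⟨C + 1, min ε ((hstar e - lo e)/(C+1)), by linarith,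
          lt_min hε (by positivity), ?_⟩
        intro δ hδ hδε
        obtain ⟨h', hbox, hdiv, hnear⟩ := H δ hδ (le_trans hδε (min_le_left _ _))
        have hδ2 : (C+1) * δ ≤ hstar e - lo e := by
          have h3 := le_trans hδε (min_le_right _ _)
          calc (C+1)*δ ≤ (C+1) * ((hstar e - lo e)/(C+1)) := by nlinarith
          _ = hstar e - lo e := by field_simp
        refine ⟨fun e' => h' e' + if e' = e then -δ else 0, ?_, ?_, ?_⟩
        · intro e'
          beta_reduce
          by_cases he' : e' = e
          · subst he'
            rw [if_pos rfl]
            have h4 := abs_le.mp (hnear e')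
            have h5 := (hbox e').2
            constructor
            · linarith [h4.1]
            · linarith
          · simp only [if_neg he', add_zero]; exact hbox e'
        · intro x
          rw [divg_single hd tl h' e (-δ) x, hdiv x]
          ring
        · intro e'
          beta_reduce
          by_cases he' : e' = e
          · subst he'
            rw [if_pos rfl]
            have h4 : h' e' + -δ - hstar e' = (h' e' - hstar e') + (-δ) := by ring
            rw [h4]
            calc |(h' e' - hstar e') + (-δ)| ≤ |h' e' - hstar e'| + |(-δ)| := abs_add_le _ _
            _ ≤ C * δ + δ := by
                have := hnear e'
                rw [abs_neg, abs_of_pos hδ]; linarith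
            _ = (C+1) * δ := by ring
          · simp only [if_neg he', add_zero]
            calc |h' e' - hstar e'| ≤ C * δ := hnear e'
            _ ≤ (C+1) * δ := by nlinarith
  by_cases hreach : Reach hd tl lo hi hstar w v
  · exfalso
    obtain ⟨C, ε, hC, hε, H⟩ := aug v hreach
    obtain ⟨h', hbox, hdiv, _⟩ := H ε hε le_rfl
    have hmem : h' ∈ K := by
      refine ⟨hbox, fun u hu1 hu2 => ?_⟩
      rw [hdiv u, hKm.2 u hu1 hu2, if_neg (Ne.symm hu1), if_neg (Ne.symm hu2)]
      ring
    have hle : divg hd tl h' v ≤ divg hd tl hstar v := hmax hmem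
    rw [hdiv v, if_pos rfl, if_neg hvw] at hle
    linarith
  · set R : Finset V := univ.filter (fun u => Reach hd tl lo hi hstar w u) with hR
    have hwR : w ∈ R := mem_filter.mpr ⟨mem_univ _, Reach.base⟩
    have hvR : v ∉ R := fun hv => hreach (mem_filter.mp hv).2
    have hcut : ∑ u ∈ R, divg hd tl hstar u ≤ ∑ u ∈ R, divg hd tl f u := by
      rw [sum_divg, sum_divg]
      refine Finset.sum_le_sum fun e _ => ?_
      by_cases h1 : hd e ∈ R <;> by_cases h2 : tl e ∈ R
      · simp [h1, h2]
      · have hr1 : Reach hd tl lo hi hstar w (hd e) := (mem_filter.mp h1).2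
        have h3 : ¬ (lo e < hstar e) :=
          fun hlt => h2 (mem_filter.mpr ⟨mem_univ _, Reach.bwd e hr1 hlt⟩)
        simp only [if_pos h1, if_neg h2, sub_zero]
        have h4 := le_of_not_gt h3
        linarith [hlo_le e]
      · have hr2 : Reach hd tl lo hi hstar w (tl e) := (mem_filter.mp h2).2
        have h3 : ¬ (hstar e < hi e) :=
          fun hlt => h1 (mem_filter.mpr ⟨mem_univ _, Reach.fwd e hr2 hlt⟩)
        simp only [if_neg h1, if_pos h2, zero_sub]
        have h4 := le_of_not_gt h3
        linarith [hle_hi e]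
      · simp [h1, h2]
    have hlhs : ∑ u ∈ R, divg hd tl hstar u = divg hd tl hstar w := by
      refine Finset.sum_eq_single_of_mem w hwR fun u hu hne => ?_
      exact hKm.2 u (fun h => hvR (h ▸ hu)) hne
    have hrhs : ∑ u ∈ R, divg hd tl f u ≤ d w := by
      have h1 : ∑ u ∈ R, divg hd tl f u = ∑ u ∈ R, d u :=
        Finset.sum_congr rfl fun u _ => hf u
      rw [h1, ← Finset.add_sum_erase R d hwR]
      have h2 : ∑ u ∈ R.erase w, d u ≤ 0 :=
        Finset.sum_nonpos fun u hu => hdle u (fun h => hvR (h ▸ (Finset.mem_of_mem_erase hu)))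
      linarith
    have htot : divg hd tl hstar v + divg hd tl hstar w = 0 := by
      have h0 := divg_total hd tl hstar
      have h1 : ∑ x : V, divg hd tl hstar x = ∑ x ∈ ({v, w} : Finset V), divg hd tl hstar x := by
        symm
        apply Finset.sum_subset (Finset.subset_univ _)
        intro x _ hx
        simp only [Finset.mem_insert, Finset.mem_singleton] at hx
        push_neg at hx
        exact hKm.2 x hx.1 hx.2
      rw [h1, Finset.sum_pair (Ne.symm hvw)] at h0
      exact h0
    have hwle : divg hd tl hstar w ≤ d w := by rw [← hlhs]; exact le_trans hcut hrhs
    have hTle : -(d w) ≤ divg hd tl hstar v := by linarith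
    have hT0 : 0 ≤ -(d w) := by have := hdle w hvw; linarith
    by_cases hvp : divg hd tl hstar v ≤ 0
    · have hTz : -(d w) = 0 := le_antisymm (le_trans hTle hvp) hT0
      refine ⟨0, fun e => ⟨hlo0 e, h0hi e⟩, fun x => ?_⟩
      rw [hTz]
      simp [divg]
    · push_neg at hvp
      set t := (-(d w)) / divg hd tl hstar v with ht
      have ht0 : 0 ≤ t := div_nonneg hT0 hvp.le
      have ht1 : t ≤ 1 := by rw [ht, div_le_one hvp]; exact hTle
      refine ⟨fun e => t * hstar e, ?_, ?_⟩
      · intro e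
        obtain ⟨hb1, hb2⟩ := hKm.1 e
        constructor
        · show lo e ≤ t * hstar e
          rcases le_total 0 (hstar e) with hsgn | hsgn
          · have h5 : 0 ≤ t * hstar e := mul_nonneg ht0 hsgn
            linarith [hlo0 e]
          · nlinarith
        · show t * hstar e ≤ hi e
          rcases le_total 0 (hstar e) with hsgn | hsgn
          · nlinarith
          · nlinarith [h0hi e]
      · intro x
        have hlin : divg hd tl (fun e => t * hstar e) x = t * divg hd tl hstar x := by
          have h6 := divg_linear hd tl t 0 hstar hstar x
          simp only [zero_mul, add_zero] at h6
          exact h6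
        rw [hlin]
        by_cases hx1 : x = v
        · subst hx1
          rw [if_pos rfl, if_neg (Ne.symm hvw), ht, div_mul_cancel₀ _ (ne_of_gt hvp)]
          ring
        · by_cases hx2 : x = w
          · subst hx2
            rw [if_neg hx1, if_pos rfl]
            have h7 : divg hd tl hstar x = -(divg hd tl hstar v) := by linarith
            rw [h7, ht, mul_neg, div_mul_cancel₀ _ (ne_of_gt hvp)]
            ring
          · rw [if_neg hx1, if_neg hx2, hKm.2 x hx1 hx2]
            ring


lemma assign_shift {V : Type*} [Fintype V] [DecidableEq V] (s : V → ℝ) (hs : ∀ u, s u ≤ 0)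
    (v w x : V) :
    assign s w x = assign s v x
      + (∑ u : V, |s u|) * ((if x = w then 1 else 0) - (if x = v then 1 else 0)) := by
  have hσ : (∑ u : V, |s u|) = -(∑ u : V, s u) := by
    rw [← Finset.sum_neg_distrib]
    exact Finset.sum_congr rfl fun u _ => abs_of_nonpos (hs u)
  have herase : ∀ y : V, s y + ∑ u ∈ univ.erase y, s u = ∑ u : V, s u :=
    fun y => Finset.add_sum_erase univ s (mem_univ y)
  unfold assign
  by_cases hxw : x = w <;> by_cases hxv : x = v
  · subst hxw; subst hxv
    rw [if_pos rfl]
    ring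
  · subst hxw
    rw [if_pos rfl, if_pos rfl, if_neg hxv, if_neg hxv, hσ]
    have h1 := herase x
    linarith
  · subst hxv
    rw [if_neg hxw, if_pos rfl, if_neg hxw, if_pos rfl, hσ]
    have h1 := herase x
    linarith
  · rw [if_neg hxw, if_neg hxv, if_neg hxw, if_neg hxv]
    ring

lemma absle (F H e' M : ℝ) (h1 : min F 0 ≤ H) (h2 : H ≤ max F 0)
    (hη : 1 ≤ e') (hM : 1 ≤ M) (hηM : e' - 1 ≤ M) : |F - e' * H| ≤ M * |F| := by
  rcases le_total 0 F with hF | hF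
  · rw [min_eq_right hF] at h1
    rw [max_eq_left hF] at h2
    rw [abs_of_nonneg hF, abs_le]
    constructor <;> nlinarith
  · rw [min_eq_left hF] at h1
    rw [max_eq_right hF] at h2
    rw [abs_of_nonpos hF, abs_le]
    constructor <;> nlinarith


/-- Theorem: choosing a master source `w i` as the target of each nonzero supply
vector `s i` is a `max{η-1,1}`-approximate solution to LoMuF, where
`η = max_i (∑_v |s i v|)/|s i (w i)|` is the concentration of the supply vectors. -/

theorem concentration_approx {V E ι : Type*} [Fintype V] [Fintype E] [Fintype ι]
    [DecidableEq V] [Nonempty ι]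
    (hd tl : E → V) (c : E → ℝ) (hc : ∀ e, 0 ≤ c e)
    (s : ι → V → ℝ) (hs : ∀ i v, s i v ≤ 0) (hne : ∀ i, s i ≠ 0)
    (w : ι → V) (hw : ∀ i v, |s i v| ≤ |s i (w i)|)
    (η : ℝ) (hη : η = ⨆ i : ι, (∑ v : V, |s i v|) / |s i (w i)|) :
    lamS hd tl c s / max (η - 1) 1
      ≤ lamD hd tl c (fun i => assign (s i) (w i)) := by
  classical
  have hM1 : (1:ℝ) ≤ max (η - 1) 1 := le_max_right _ _
  have hM0 : (0:ℝ) < max (η - 1) 1 := lt_of_lt_of_le one_pos hM1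
  have hsw : ∀ i, 0 < |s i (w i)| := by
    intro i
    rcases Function.ne_iff.mp (hne i) with ⟨u, hu⟩
    exact lt_of_lt_of_le (abs_pos.mpr hu) (hw i u)
  have hη'1 : ∀ i, 1 ≤ (∑ u : V, |s i u|) / |s i (w i)| := by
    intro i
    rw [le_div_iff₀ (hsw i), one_mul]
    exact Finset.single_le_sum (f := fun u => |s i u|) (fun u _ => abs_nonneg _) (mem_univ (w i))
  have hη'M : ∀ i, (∑ u : V, |s i u|) / |s i (w i)| - 1 ≤ max (η - 1) 1 := by
    intro i
    have hle : (∑ u : V, |s i u|) / |s i (w i)| ≤ η := by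
      rw [hη]
      exact le_ciSup (f := fun j : ι => (∑ v : V, |s j v|) / |s j (w j)|) (Set.Finite.bddAbove (Set.finite_range _)) i
    have h2 : (∑ u : V, |s i u|) / |s i (w i)| - 1 ≤ η - 1 := by linarith
    exact le_trans h2 (le_max_left _ _)
  set Dset : Set ℝ := {l : ℝ | 0 ≤ l ∧ ∃ f : ι → E → ℝ,
    (∀ e, ∑ i, |f i e| ≤ c e) ∧
    ∀ i, satisfiesFlow hd tl (f i) (fun u => l * assign (s i) (w i) u)} with hDset
  set Sset : Set ℝ := {l : ℝ | 0 ≤ l ∧ ∃ (v : ι → V) (f : ι → E → ℝ),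
    (∀ e, ∑ i, |f i e| ≤ c e) ∧
    ∀ i, satisfiesFlow hd tl (f i) (fun u => l * assign (s i) (v i) u)} with hSset
  have hD : lamD hd tl c (fun i => assign (s i) (w i)) = sSup Dset := rfl
  have hS : lamS hd tl c s = sSup Sset := rfl
  have hD0 : ∀ l ∈ Dset, (0:ℝ) ≤ l := by
    intro l hl
    rw [hDset] at hl
    exact hl.1
  have hS0mem : (0:ℝ) ∈ Sset := by
    rw [hSset]
    refine ⟨le_refl 0, w, fun _ _ => 0, fun e => by simpa using hc e, fun i x => by simp⟩
  have hDnn : 0 ≤ sSup Dset := Real.sSup_nonneg hD0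
  have key : ∀ l ∈ Sset, l / max (η - 1) 1 ∈ Dset := by
    intro l hl
    rw [hSset] at hl
    obtain ⟨hl0, v, f, hcap, hsat⟩ := hl
    rw [hDset]
    refine ⟨div_nonneg hl0 hM0.le, ?_⟩
    have hex : ∀ i : ι, ∃ h : E → ℝ,
        (∀ e, min (f i e) 0 ≤ h e ∧ h e ≤ max (f i e) 0) ∧
        ∀ x, divg hd tl h x
          = (l * |s i (w i)|) * ((if x = v i then 1 else 0) - (if x = w i then 1 else 0)) := by
      intro i
      by_cases hvw : w i = v i
      · refine ⟨0, fun e => ⟨min_le_right _ _, le_max_right _ _⟩, fun x => ?_⟩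
        rw [hvw]
        simp [divg]
      · have hf' : ∀ x, divg hd tl (f i) x = l * assign (s i) (v i) x :=
          fun x => (hsat i x).symm
        have hdle : ∀ u, u ≠ v i → l * assign (s i) (v i) u ≤ 0 := by
          intro u hu
          have ha : assign (s i) (v i) u = s i u := by
            unfold assign
            rw [if_neg hu]
          rw [ha]
          nlinarith [mul_nonneg hl0 (neg_nonneg.mpr (hs i u))]
        obtain ⟨h, hb, hdv⟩ := subflow hd tl (f i) (fun u => l * assign (s i) (v i) u)
          hf' (v i) (w i) hvw hdle
        refine ⟨h, hb, fun x => ?_⟩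
        rw [hdv x]
        have ha : assign (s i) (v i) (w i) = s i (w i) := by
          unfold assign
          rw [if_neg hvw]
        have hb2 : -(l * assign (s i) (v i) (w i)) = l * |s i (w i)| := by
          rw [ha, abs_of_nonpos (hs i (w i))]
          ring
        rw [hb2]
    choose h hb hdv using hex
    refine ⟨fun i e => (1 / max (η - 1) 1) * f i e
      + (-((∑ u : V, |s i u|) / |s i (w i)|) / max (η - 1) 1) * h i e, ?_, ?_⟩
    · intro e
      have hle1 : ∀ i : ι, |(1 / max (η - 1) 1) * f i e
          + (-((∑ u : V, |s i u|) / |s i (w i)|) / max (η - 1) 1) * h i e| ≤ |f i e| := by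
        intro i
        have hcomb : (1 / max (η - 1) 1) * f i e
            + (-((∑ u : V, |s i u|) / |s i (w i)|) / max (η - 1) 1) * h i e
            = (f i e - ((∑ u : V, |s i u|) / |s i (w i)|) * h i e) / max (η - 1) 1 := by
          ring
        rw [hcomb, abs_div, abs_of_pos hM0, div_le_iff₀ hM0]
        have h5 := absle (f i e) (h i e) ((∑ u : V, |s i u|) / |s i (w i)|)
          (max (η - 1) 1) (hb i e).1 (hb i e).2 (hη'1 i) hM1 (hη'M i)
        linarith
      calc ∑ i, |(1 / max (η - 1) 1) * f i e
          + (-((∑ u : V, |s i u|) / |s i (w i)|) / max (η - 1) 1) * h i e|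
          ≤ ∑ i, |f i e| := Finset.sum_le_sum fun i _ => hle1 i
      _ ≤ c e := hcap e
    · intro i x
      show (l / max (η - 1) 1) * assign (s i) (w i) x
        = divg hd tl (fun e => (1 / max (η - 1) 1) * f i e
            + (-((∑ u : V, |s i u|) / |s i (w i)|) / max (η - 1) 1) * h i e) x
      rw [divg_linear hd tl (1 / max (η - 1) 1)
        (-((∑ u : V, |s i u|) / |s i (w i)|) / max (η - 1) 1) (f i) (h i) x]
      have hfd : divg hd tl (f i) x = l * assign (s i) (v i) x := (hsat i x).symm
      rw [hfd, hdv i x, assign_shift (s i) (hs i) (v i) (w i) x]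
      have hswne : |s i (w i)| ≠ 0 := ne_of_gt (hsw i)
      have hMne : max (η - 1) 1 ≠ 0 := ne_of_gt hM0
      field_simp
      ring
  rw [hS, hD]
  by_cases hSb : BddAbove Sset
  · rw [div_le_iff₀ hM0]
    by_cases hDb : BddAbove Dset
    · refine csSup_le ⟨0, hS0mem⟩ fun l hl => ?_
      have h1 : l / max (η - 1) 1 ≤ sSup Dset := le_csSup hDb (key l hl)
      have h2 : l = (l / max (η - 1) 1) * max (η - 1) 1 :=
        (div_mul_cancel₀ l (ne_of_gt hM0)).symm
      rw [h2]
      exact mul_le_mul_of_nonneg_right h1 hM0.le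
    · exfalso
      have hall : ∀ i x, assign (s i) (w i) x = 0 := by
        by_contra hcon
        push_neg at hcon
        obtain ⟨i, x, hx⟩ := hcon
        apply hDb
        refine ⟨2 * (∑ e : E, c e) / |assign (s i) (w i) x|, ?_⟩
        intro l hl
        rw [hDset] at hl
        obtain ⟨hl0, g, hgc, hgs⟩ := hl
        have h2 : l * assign (s i) (w i) x = divg hd tl (g i) x := hgs i x
        have h4 : ∀ p : E → V, |∑ e : E, if p e = x then g i e else 0| ≤ ∑ e : E, c e := by
          intro p
          calc |∑ e : E, if p e = x then g i e else 0|
              ≤ ∑ e : E, |if p e = x then g i e else 0| := Finset.abs_sum_le_sum_abs _ _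
          _ ≤ ∑ e : E, c e := by
              refine Finset.sum_le_sum fun e _ => ?_
              have h6 : |g i e| ≤ c e :=
                le_trans (Finset.single_le_sum (fun j _ => abs_nonneg (g j e)) (mem_univ i))
                  (hgc e)
              by_cases hp : p e = x
              · rw [if_pos hp]; exact h6
              · rw [if_neg hp, abs_zero]
                exact le_trans (abs_nonneg (g i e)) h6
        have h3 : |divg hd tl (g i) x| ≤ 2 * ∑ e : E, c e := by
          unfold divg
          calc |(∑ e : E, if hd e = x then g i e else 0) - (∑ e : E, if tl e = x then g i e else 0)|
              ≤ |∑ e : E, if hd e = x then g i e else 0| + |∑ e : E, if tl e = x then g i e else 0| :=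
                abs_sub _ _
          _ ≤ 2 * ∑ e : E, c e := by
              have := h4 hd
              have := h4 tl
              linarith
        have hbx : 0 < |assign (s i) (w i) x| := abs_pos.mpr hx
        rw [le_div_iff₀ hbx]
        have h7 : |l * assign (s i) (w i) x| = l * |assign (s i) (w i) x| := by
          rw [abs_mul, abs_of_nonneg hl0]
        rw [h2] at h7
        nlinarith [abs_nonneg (divg hd tl (g i) x)]
      obtain ⟨B, hB⟩ := hSb
      have hmem : max B 0 + 1 ∈ Sset := by
        rw [hSset]
        refine ⟨by positivity, w, fun _ _ => 0, fun e => by simpa using hc e, fun i x => ?_⟩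
        show (max B 0 + 1) * assign (s i) (w i) x = _
        rw [hall i x]
        simp
      have h5 := hB hmem
      have h6 : B ≤ max B 0 := le_max_left B 0
      linarith
  · rw [Real.sSup_of_not_bddAbove hSb, zero_div]
    exact hDnn
end
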